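/- Suppose every mode-p marginal x_p(j) = Σ_{i : i_p = j} x_i is strictly positive. Let θ = (a_1,…,a_P) have strictly positive entries and suppose the gradient of the rank-one PCP loglikelihood vanishes at θ, i.e., x_p(j)/a_p(j) = ∏_{q≠p} λ_q for all p and j. Then the constraint λ_1 λ_2 ⋯ λ_P = Σ_i x_i holds, and the rank-one tensor determined by θ is uniquely given in closed form: for every multi-index i, ∏_{p=1}^P a_p(i_p) = (Σ_{i'} x_{i'})^{−(P−1)} ∏_{p=1}^P x_p(i_p). -/

import Mathlib

open Finset

noncomputable section

variable {P : ℕ} {N : Fin P → ℕ}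

/-- Rank-one parameter tensor entry `m_i = ∏_p a_p(i_p)`. -/
def mOne (a : (p : Fin P) → Fin (N p) → ℝ) (i : (p : Fin P) → Fin (N p)) : ℝ :=
  ∏ p, a p (i p)

/-- Rank-one PCP loglikelihood `ℓ(X|θ) = Σ_i [ x_i log m_i − m_i − log(x_i!) ]`. -/
def llik1 (a : (p : Fin P) → Fin (N p) → ℝ) (X : ((p : Fin P) → Fin (N p)) → ℕ) : ℝ :=
  ∑ i : (p : Fin P) → Fin (N p),
    ((X i : ℝ) * Real.log (mOne a i) - mOne a i - Real.log (Nat.factorial (X i) : ℝ))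

/-- Mode-`p` marginal sum `x_p(j) = Σ_{i : i_p = j} x_i` (as a real number). -/
def xmarg (X : ((p : Fin P) → Fin (N p)) → ℕ) (p : Fin P) (j : Fin (N p)) : ℝ :=
  ∑ i ∈ Finset.univ.filter (fun i : (q : Fin P) → Fin (N q) => i p = j), (X i : ℝ)

/-- Factor sum `λ_p = Σ_j a_p(j)`. -/
def lam1 (a : (p : Fin P) → Fin (N p) → ℝ) (p : Fin P) : ℝ :=
  ∑ j, a p j

/-- **Closed-form rank-one maximum likelihood estimator.** Suppose every mode-`p`
marginal `x_p(j)` is strictly positive, `θ = (a_1,…,a_P)` has strictly positive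
entries, and the gradient of the rank-one PCP loglikelihood vanishes at `θ`, i.e.
`x_p(j)/a_p(j) = ∏_{q≠p} λ_q` for all `p, j`. Then `λ_1 ⋯ λ_P = Σ_i x_i`, and the
rank-one tensor determined by `θ` is uniquely given in closed form:
`∏_p a_p(i_p) = (Σ_{i'} x_{i'})^{-(P-1)} ∏_p x_p(i_p)` for every multi-index `i`. -/
theorem stmt_14 (P : ℕ) (hP : 2 ≤ P) (N : Fin P → ℕ) (hN : ∀ p, 1 ≤ N p)
    (a : (p : Fin P) → Fin (N p) → ℝ) (ha : ∀ p j, 0 < a p j)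
    (X : ((p : Fin P) → Fin (N p)) → ℕ)
    (hX : ∀ (p : Fin P) (j : Fin (N p)), 0 < xmarg X p j)
    (hgrad : ∀ (p : Fin P) (j : Fin (N p)),
      xmarg X p j / a p j = ∏ q ∈ Finset.univ.erase p, lam1 a q) :
    (∏ p, lam1 a p) = (∑ i : (p : Fin P) → Fin (N p), (X i : ℝ)) ∧
    ∀ i : (p : Fin P) → Fin (N p),
      mOne a i =
        ((∑ i' : (p : Fin P) → Fin (N p), (X i' : ℝ)) ^ (P - 1))⁻¹ *
          ∏ p, xmarg X p (i p) := by

  -- positivity of lam1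
  have hlam : ∀ p, 0 < lam1 a p := by
    intro p
    have hne : Nonempty (Fin (N p)) := ⟨⟨0, hN p⟩⟩
    exact Finset.sum_pos (fun j _ => ha p j) Finset.univ_nonempty
  set C : Fin P → ℝ := fun p => ∏ q ∈ Finset.univ.erase p, lam1 a q with hC
  have hCpos : ∀ p, 0 < C p := fun p => Finset.prod_pos (fun q _ => hlam q)
  -- marginal identity
  have hmarg : ∀ p j, xmarg X p j = a p j * C p := by
    intro p j
    have h := hgrad p j
    rw [div_eq_iff (ne_of_gt (ha p j))] at h
    rw [h]; ring
  -- sum of marginals = total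
  have hsum : ∀ p : Fin P, ∑ j, xmarg X p j = ∑ i : (p : Fin P) → Fin (N p), (X i : ℝ) := by
    intro p
    simpa [xmarg] using
      Finset.sum_fiberwise (Finset.univ : Finset ((q : Fin P) → Fin (N q)))
        (fun i => i p) (fun i => (X i : ℝ))
  have hkey : ∀ p : Fin P, lam1 a p * C p = ∑ i : (p : Fin P) → Fin (N p), (X i : ℝ) := by
    intro p
    have := hsum p
    rw [Finset.sum_congr rfl (fun j _ => hmarg p j)] at this
    rw [← this, ← Finset.sum_mul]
    rfl
  have hp0 : ∃ p0 : Fin P, True := ⟨⟨0, by omega⟩, trivial⟩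
  obtain ⟨p0, -⟩ := hp0
  have hprod : (∏ p, lam1 a p) = ∑ i : (p : Fin P) → Fin (N p), (X i : ℝ) := by
    rw [← hkey p0, hC, ← Finset.mul_prod_erase Finset.univ (lam1 a) (Finset.mem_univ p0)]
  refine ⟨hprod, fun i => ?_⟩
  have hCval : ∀ p, C p = (∏ q, lam1 a q) / lam1 a p := by
    intro p
    rw [eq_div_iff (ne_of_gt (hlam p)), hC, mul_comm,
      Finset.mul_prod_erase Finset.univ (lam1 a) (Finset.mem_univ p)]
  have hap : ∀ p, a p (i p) = xmarg X p (i p) / C p := by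
    intro p
    rw [hmarg p (i p), mul_div_cancel_right₀ _ (ne_of_gt (hCpos p))]
  have hL : 0 < ∏ p, lam1 a p := Finset.prod_pos (fun p _ => hlam p)
  have hprodC : ∏ p, C p = (∏ p, lam1 a p) ^ (P - 1) := by
    rw [Finset.prod_congr rfl (fun p _ => hCval p), Finset.prod_div_distrib,
      Finset.prod_const]
    rw [Finset.card_univ, Fintype.card_fin]
    rw [div_eq_iff (ne_of_gt hL)]
    rw [← pow_succ]
    congr 1
    omega
  calc mOne a i = ∏ p, (xmarg X p (i p) / C p) :=
        Finset.prod_congr rfl (fun p _ => hap p)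
    _ = (∏ p, xmarg X p (i p)) / ∏ p, C p :=
          Finset.prod_div_distrib (f := fun p => xmarg X p (i p)) (g := C)
    _ = ((∑ i' : (p : Fin P) → Fin (N p), (X i' : ℝ)) ^ (P - 1))⁻¹ *
          ∏ p, xmarg X p (i p) := by
        rw [hprodC, hprod, div_eq_inv_mul]
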